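/- For every real y ≥ −1 and every λ ∈ [0, 1), it holds that log(1 + λy) ≥ λy + y²·(log(1 − λ) + λ). -/

import Mathlib

/-- For every real `y ≥ -1` and every `λ ∈ [0,1)`,
`log (1 + λ y) ≥ λ y + y² (log (1 - λ) + λ)`. -/
theorem log_one_add_mul_lower_bound (y l : ℝ) (hy : -1 ≤ y) (hl0 : 0 ≤ l) (hl1 : l < 1) :
    l * y + y ^ 2 * (Real.log (1 - l) + l) ≤ Real.log (1 + l * y) := by
  set F : ℝ → ℝ := fun t => Real.log (1 + t * y) - (t * y + y ^ 2 * (Real.log (1 - t) + t))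
    with hFdef
  have hpos : ∀ t : ℝ, 0 ≤ t → t < 1 → 0 < 1 + t * y ∧ 0 < 1 - t := by
    intro t ht0 ht1
    constructor
    · nlinarith
    · linarith
  have hderiv : ∀ t : ℝ, 0 ≤ t → t < 1 →
      HasDerivAt F (y / (1 + t * y) - (y + y ^ 2 * (-(1 - t)⁻¹ + 1))) t := by
    intro t ht0 ht1
    obtain ⟨ha, hb⟩ := hpos t ht0 ht1
    have h1 : HasDerivAt (fun t : ℝ => 1 + t * y) y t := by
      simpa using ((hasDerivAt_id t).mul_const y).const_add 1
    have h1' : HasDerivAt (fun t : ℝ => Real.log (1 + t * y)) (y / (1 + t * y)) t :=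
      h1.log (ne_of_gt ha)
    have h2 : HasDerivAt (fun t : ℝ => 1 - t) (-1) t := by
      simpa using (hasDerivAt_id t).const_sub 1
    have h2' : HasDerivAt (fun t : ℝ => Real.log (1 - t)) (-(1 - t)⁻¹) t := by
      have := h2.log (ne_of_gt hb)
      simpa [div_eq_mul_inv] using this
    have h3 : HasDerivAt (fun t : ℝ => t * y + y ^ 2 * (Real.log (1 - t) + t))
        (y + y ^ 2 * (-(1 - t)⁻¹ + 1)) t := by
      have := ((h2'.add (hasDerivAt_id t)).const_mul (y ^ 2)).add ((hasDerivAt_id t).mul_const y)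
      refine (this.congr_deriv (by ring)).congr_of_eventuallyEq (Filter.Eventually.of_forall fun x => ?_)
      simp only [Pi.add_apply, id]; ring
    exact h1'.sub h3
  have hmono : MonotoneOn F (Set.Icc 0 l) := by
    apply monotoneOn_of_deriv_nonneg (convex_Icc 0 l)
    · intro t ht
      obtain ⟨ht0, htl⟩ := ht
      exact (hderiv t ht0 (lt_of_le_of_lt htl hl1)).continuousAt.continuousWithinAt
    · intro t ht
      rw [interior_Icc] at ht
      exact (hderiv t ht.1.le (ht.2.trans hl1)).differentiableAt.differentiableWithinAt
    · intro t ht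
      rw [interior_Icc] at ht
      have ht0 : 0 ≤ t := ht.1.le
      have ht1 : t < 1 := ht.2.trans hl1
      obtain ⟨ha, hb⟩ := hpos t ht0 ht1
      rw [(hderiv t ht0 ht1).deriv]
      have key : y / (1 + t * y) - (y + y ^ 2 * (-(1 - t)⁻¹ + 1))
          = t ^ 2 * y ^ 2 * (1 + y) / ((1 - t) * (1 + t * y)) := by
        rw [div_sub' ha.ne', div_eq_div_iff ha.ne' (mul_ne_zero hb.ne' ha.ne')]
        field_simp
        ring
      rw [key]
      have h1y : (0:ℝ) ≤ 1 + y := by linarith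
      have := mul_nonneg (mul_nonneg (sq_nonneg t) (sq_nonneg y)) h1y
      positivity
  have h0 : F 0 = 0 := by simp [hFdef]
  have hl : F 0 ≤ F l := hmono (Set.left_mem_Icc.mpr hl0) (Set.right_mem_Icc.mpr hl0) hl0
  rw [h0] at hl
  simp only [hFdef] at hl
  linarith
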